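/- Every graph on a countably infinite vertex set having the extension property is homogeneous: every isomorphism between finite induced subgraphs extends to an automorphism of the whole graph. -/
import Mathlib


/-- The extension property characterising the random graph `R`. -/
def SimpleGraph.HasExtensionProperty {V : Type*} (Γ : SimpleGraph V) : Prop :=
  ∀ U W : Finset V, Disjoint U W →
    ∃ z, z ∉ U ∧ z ∉ W ∧ (∀ u ∈ U, Γ.Adj z u) ∧ (∀ w ∈ W, ¬ Γ.Adj z w)
/-- A graph is homogeneous if every isomorphism between finite induced subgraphs
extends to an automorphism. -/
def SimpleGraph.IsHomogeneous {V : Type*} (Γ : SimpleGraph V) : Prop :=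
  ∀ (A : Finset V) (f : V → V), Set.InjOn f A →
    (∀ x ∈ A, ∀ y ∈ A, (Γ.Adj x y ↔ Γ.Adj (f x) (f y))) →
    ∃ g : Γ ≃g Γ, ∀ x ∈ A, g x = f x

namespace ExtAux

variable {V : Type} [DecidableEq V] (Γ : SimpleGraph V)

/-- A finite partial isomorphism, coded as a set of pairs. -/
def Good (s : Finset (V × V)) : Prop :=
  ∀ p ∈ s, ∀ q ∈ s, (p.1 = q.1 ↔ p.2 = q.2) ∧ (Γ.Adj p.1 q.1 ↔ Γ.Adj p.2 q.2)

lemma good_swap {s : Finset (V × V)} (hs : Good Γ s) : Good Γ (s.image Prod.swap) := by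
  intro p hp q hq
  simp only [Finset.mem_image] at hp hq
  obtain ⟨p', hp', rfl⟩ := hp
  obtain ⟨q', hq', rfl⟩ := hq
  obtain ⟨h1, h2⟩ := hs _ hp' _ hq'
  exact ⟨h1.symm, h2.symm⟩

lemma swap_swap (u : Finset (V × V)) : (u.image Prod.swap).image Prod.swap = u := by
  rw [Finset.image_image]
  simp [Function.comp]

lemma good_insert (hΓ : Γ.HasExtensionProperty) {s : Finset (V × V)} (hs : Good Γ s) (a : V) :
    ∃ b, Good Γ (insert (a, b) s) := by
  by_cases ha : ∃ p ∈ s, p.1 = a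
  · obtain ⟨⟨a', b⟩, hp, rfl⟩ := ha
    refine ⟨b, ?_⟩
    have h : insert (a', b) s = s := Finset.insert_eq_self.2 hp
    rwa [h]
  · push_neg at ha
    classical
    set U := (s.filter (fun p : V × V => Γ.Adj a p.1)).image Prod.snd with hU
    set W := (s.filter (fun p : V × V => ¬ Γ.Adj a p.1)).image Prod.snd with hW
    have hdisj : Disjoint U W := by
      rw [Finset.disjoint_left]
      rintro b hbU hbW
      simp only [hU, hW, Finset.mem_image, Finset.mem_filter] at hbU hbW
      obtain ⟨p, ⟨hp, hpa⟩, rfl⟩ := hbU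
      obtain ⟨q, ⟨hq, hqa⟩, hqb⟩ := hbW
      have h1 : q.1 = p.1 := (hs q hq p hp).1.2 hqb
      rw [h1] at hqa
      exact hqa hpa
    obtain ⟨z, hzU, hzW, hzadj, hznadj⟩ := hΓ U W hdisj
    refine ⟨z, ?_⟩
    -- key property for the new pair against old pairs
    have key : ∀ q ∈ s, (a = q.1 ↔ z = q.2) ∧ (Γ.Adj a q.1 ↔ Γ.Adj z q.2) := by
      intro q hq
      have hzq : z ≠ q.2 := by
        by_cases hqa : Γ.Adj a q.1
        · intro h; apply hzU; rw [h, hU]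
          exact Finset.mem_image_of_mem _ (Finset.mem_filter.2 ⟨hq, hqa⟩)
        · intro h; apply hzW; rw [h, hW]
          exact Finset.mem_image_of_mem _ (Finset.mem_filter.2 ⟨hq, hqa⟩)
      have haq : a ≠ q.1 := fun h => ha q hq h.symm
      refine ⟨iff_of_false haq hzq, ?_⟩
      by_cases hqa : Γ.Adj a q.1
      · exact iff_of_true hqa (hzadj _ (Finset.mem_image_of_mem _ (Finset.mem_filter.2 ⟨hq, hqa⟩)))
      · exact iff_of_false hqa (hznadj _ (Finset.mem_image_of_mem _ (Finset.mem_filter.2 ⟨hq, hqa⟩)))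
    intro p hp q hq
    rcases Finset.mem_insert.1 hp with rfl | hp <;> rcases Finset.mem_insert.1 hq with rfl | hq
    · exact ⟨iff_of_true rfl rfl, by simp⟩
    · exact key q hq
    · obtain ⟨h1, h2⟩ := key p hp
      constructor
      · rw [eq_comm, @eq_comm _ p.2]; exact h1
      · rw [Γ.adj_comm, Γ.adj_comm p.2]; exact h2
    · exact hs p hp q hq

lemma good_extend (hΓ : Γ.HasExtensionProperty) {s : Finset (V × V)} (hs : Good Γ s) (v : V) :
    ∃ t, Good Γ t ∧ s ⊆ t ∧ (∃ b, (v, b) ∈ t) ∧ (∃ a, (a, v) ∈ t) := by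
  obtain ⟨b, hb⟩ := good_insert Γ hΓ hs v
  obtain ⟨a, ha⟩ := good_insert Γ hΓ (good_swap Γ hb) v
  refine ⟨insert (a, v) (insert (v, b) s), ?_, ?_, ⟨b, ?_⟩, ⟨a, ?_⟩⟩
  · have := good_swap Γ ha
    rwa [Finset.image_insert, swap_swap] at this
  · exact fun p hp => Finset.mem_insert_of_mem (Finset.mem_insert_of_mem hp)
  · exact Finset.mem_insert_of_mem (Finset.mem_insert_self _ _)
  · exact Finset.mem_insert_self _ _

end ExtAux

/-- A countably infinite graph with the extension property is homogeneous. -/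
theorem extensionProperty_isHomogeneous {V : Type} [Countable V] [Infinite V]
    (Γ : SimpleGraph V) (hΓ : Γ.HasExtensionProperty) : Γ.IsHomogeneous := by
  classical
  intro A f hinj hadj
  obtain ⟨e, he⟩ := exists_surjective_nat V
  set s0 : Finset (V × V) := A.image (fun x => (x, f x)) with hs0
  have good0 : ExtAux.Good Γ s0 := by
    intro p hp q hq
    simp only [hs0, Finset.mem_image] at hp hq
    obtain ⟨x, hx, rfl⟩ := hp
    obtain ⟨y, hy, rfl⟩ := hq
    exact ⟨⟨fun h => by simp only at h ⊢; rw [h], fun h => hinj hx hy h⟩, hadj x hx y hy⟩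
  have step : ∀ s : Finset (V × V), ExtAux.Good Γ s → ∀ v : V,
      ∃ t, ExtAux.Good Γ t ∧ s ⊆ t ∧ (∃ b, (v, b) ∈ t) ∧ (∃ a, (a, v) ∈ t) :=
    fun s hs v => ExtAux.good_extend Γ hΓ hs v
  choose st h1 h2 h3 h4 using step
  let c : ℕ → {s : Finset (V × V) // ExtAux.Good Γ s} :=
    fun n => Nat.rec ⟨s0, good0⟩ (fun n p => ⟨st p.1 p.2 (e n), h1 p.1 p.2 (e n)⟩) n
  have cmono : ∀ m n, m ≤ n → (c m).1 ⊆ (c n).1 := by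
    intro m n h
    induction n, h using Nat.le_induction with
    | base => exact subset_rfl
    | succ n hmn ih => exact ih.trans (h2 _ _ _)
  have Rprop : ∀ {a b a' b' : V} {m n : ℕ}, (a, b) ∈ (c m).1 → (a', b') ∈ (c n).1 →
      (a = a' ↔ b = b') ∧ (Γ.Adj a a' ↔ Γ.Adj b b') := by
    intro a b a' b' m n hm hn
    have hm' := cmono m (max m n) (le_max_left _ _) hm
    have hn' := cmono n (max m n) (le_max_right _ _) hn
    exact (c (max m n)).2 _ hm' _ hn'
  have total1 : ∀ a : V, ∃ b, ∃ m, (a, b) ∈ (c m).1 := by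
    intro a
    obtain ⟨n, rfl⟩ := he a
    obtain ⟨b, hb⟩ := h3 (c n).1 (c n).2 (e n)
    exact ⟨b, n + 1, hb⟩
  choose g hg using total1
  choose nn hgn using hg
  have hR : ∀ a b, (∃ m, (a, b) ∈ (c m).1) → g a = b := by
    rintro a b ⟨m, hm⟩
    exact (Rprop (hgn a) hm).1.1 rfl
  have ginj : Function.Injective g := by
    intro a a' h
    exact (Rprop (hgn a) (hgn a')).1.2 h
  have gsurj : Function.Surjective g := by
    intro b
    obtain ⟨n, rfl⟩ := he b
    obtain ⟨a, ha⟩ := h4 (c n).1 (c n).2 (e n)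
    exact ⟨a, hR a (e n) ⟨n + 1, ha⟩⟩
  have gadj : ∀ a b, Γ.Adj a b ↔ Γ.Adj (g a) (g b) := fun a b => (Rprop (hgn a) (hgn b)).2
  refine ⟨⟨Equiv.ofBijective g ⟨ginj, gsurj⟩, @fun a b => (gadj a b).symm⟩, ?_⟩
  intro x hx
  exact hR x (f x) ⟨0, Finset.mem_image_of_mem _ hx⟩
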